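/- arXiv:1201.5817 — 6 statements merged into one kernel-verified Lean document; each statement's English description precedes it below -/
import Mathlib

section
/- Let a, b, c, d be integers, let γ = ⟨a, b, c, d⟩ be the Lipschitz integer γ = z + wj where z = a + bi and w = c + di are Gaussian integers, and suppose γ is odd, i.e. Quaternion.normSq γ = a² + b² + c² + d² is odd. Then the right ideal of the Lipschitz integers generated by iγ and γ is the whole ring if and only if z and w are coprime in ℤ[i]; that is, (∃ x y : Quaternion ℤ, (i * γ) * x + γ * y = 1) ↔ IsCoprime (⟨a, b⟩ : GaussianInt) (⟨c, d⟩ : GaussianInt). -/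
theorem quat_mk_mul_mk (a₁ a₂ a₃ a₄ b₁ b₂ b₃ b₄ : ℤ) :
    @HMul.hMul (Quaternion ℤ) (Quaternion ℤ) (Quaternion ℤ) _ ⟨a₁, a₂, a₃, a₄⟩ ⟨b₁, b₂, b₃, b₄⟩ =
    ⟨a₁ * b₁ + (-1) * a₂ * b₂ + (-1) * a₃ * b₃ + 0 * (-1) * a₃ * b₄ - (-1) * (-1) * a₄ * b₄,
      a₁ * b₂ + a₂ * b₁ + 0 * a₂ * b₂ - (-1) * a₃ * b₄ + (-1) * a₄ * b₃,
      a₁ * b₃ + (-1) * a₂ * b₄ + a₃ * b₁ + 0 * a₃ * b₂ - (-1) * a₄ * b₂,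
      a₁ * b₄ + a₂ * b₃ + 0 * a₂ * b₄ - a₃ * b₂ + a₄ * b₁⟩ :=
  rfl

theorem quat_mk_add_mk (a₁ a₂ a₃ a₄ b₁ b₂ b₃ b₄ : ℤ) :
    @HAdd.hAdd (Quaternion ℤ) (Quaternion ℤ) (Quaternion ℤ) _ ⟨a₁, a₂, a₃, a₄⟩ ⟨b₁, b₂, b₃, b₄⟩ =
    ⟨a₁ + b₁, a₂ + b₂, a₃ + b₃, a₄ + b₄⟩ :=
  rfl

theorem quat_one_eq_mk : (1 : Quaternion ℤ) = ⟨1, 0, 0, 0⟩ :=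
  rfl

theorem right_ideal_igamma_gamma_eq_top_iff_coprime (a b c d : ℤ)
    (γ i : Quaternion ℤ) (hγ : γ = ⟨a, b, c, d⟩) (hi : i = ⟨0, 1, 0, 0⟩)
    (hodd : Odd (Quaternion.normSq γ)) :
    (∃ x y : Quaternion ℤ, (i * γ) * x + γ * y = 1) ↔
      IsCoprime (⟨a, b⟩ : GaussianInt) (⟨c, d⟩ : GaussianInt) := by
  subst hγ hi
  obtain ⟨m, hm⟩ := hodd
  erw [Quaternion.normSq_def'] at hm
  simp only [] at hm
  constructor
  · rintro ⟨⟨x1, x2, x3, x4⟩, ⟨y1, y2, y3, y4⟩, hxy⟩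
    rw [Quaternion.ext_iff] at hxy
    simp only [Quaternion.re_mul, Quaternion.imI_mul, Quaternion.imJ_mul,
      Quaternion.imK_mul, Quaternion.re_add, Quaternion.imI_add, Quaternion.imJ_add,
      Quaternion.imK_add, Quaternion.re_one, Quaternion.imI_one, Quaternion.imJ_one,
      Quaternion.imK_one, quat_mk_mul_mk, quat_mk_add_mk, quat_one_eq_mk] at hxy
    obtain ⟨h1, h2, h3, h4⟩ := hxy
    refine ⟨⟨y1 - x2, x1 + y2⟩, ⟨-x4 - y3, y4 - x3⟩, ?_⟩
    rw [Zsqrtd.ext_iff]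
    constructor
    · simp only [Zsqrtd.re_add, Zsqrtd.re_mul, Zsqrtd.re_one]
      linear_combination h1
    · simp only [Zsqrtd.im_add, Zsqrtd.im_mul, Zsqrtd.im_one]
      linear_combination h2
  · rintro ⟨⟨s1, s2⟩, ⟨t1, t2⟩, hst⟩
    rw [Zsqrtd.ext_iff] at hst
    simp only [Zsqrtd.re_add, Zsqrtd.re_mul, Zsqrtd.re_one, Zsqrtd.im_add,
      Zsqrtd.im_mul, Zsqrtd.im_one] at hst
    obtain ⟨hE1, hE2⟩ := hst
    refine ⟨⟨-((m - b^2 - c^2) * s2 + (a*b - c*d) * s1),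
             (m - b^2 - c^2) * s1 - (a*b - c*d) * s2 - a,
             d + (m - b^2 - c^2) * t2 + (a*b - c*d) * t1,
             (m - b^2 - c^2) * t1 - (a*b - c*d) * t2⟩,
            ⟨-((m - b^2 - c^2) * s1 - (a*b - c*d) * s2),
             b - (m - b^2 - c^2) * s2 - (a*b - c*d) * s1,
             c + (m - b^2 - c^2) * t1 - (a*b - c*d) * t2,
             -((m - b^2 - c^2) * t2 + (a*b - c*d) * t1)⟩, ?_⟩
    rw [Quaternion.ext_iff]
    simp only [Quaternion.re_mul, Quaternion.imI_mul, Quaternion.imJ_mul,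
      Quaternion.imK_mul, Quaternion.re_add, Quaternion.imI_add, Quaternion.imJ_add,
      Quaternion.imK_add, Quaternion.re_one, Quaternion.imI_one, Quaternion.imJ_one,
      Quaternion.imK_one, quat_mk_mul_mk, quat_mk_add_mk, quat_one_eq_mk]
    refine ⟨?_, ?_, ?_, ?_⟩
    · linear_combination hm - 2*(m - b^2 - c^2)*hE1 + 2*(a*b - c*d)*hE2
    · linear_combination (-2*(m - b^2 - c^2))*hE2 + (-2*(a*b - c*d))*hE1
    · ring
    · ring
end

section
/- Let n be a natural number and let u, v : Fin n → (Fin (n+1) → ℝ) be two families of n vectors in ℝ^{n+1}. Define their vector products c, d : Fin (n+1) → ℝ by letting c m (resp. d m) be the determinant of the (n+1)×(n+1) matrix whose first n rows are u 0, …, u (n-1) (resp. v 0, …, v (n-1)) and whose last row is the standard basis vector e_m (Pi.single m 1). Then c ⬝ᵥ d equals the determinant of the n×n matrix whose (i, j) entry is u i ⬝ᵥ v j. -/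
open Matrix

/-- Multilinearity in the last row: the determinant with last row `w`
equals `d ⬝ᵥ w` where `d m` is the determinant with last row `e_m`. -/
lemma vp_key (n : ℕ) (v : Fin n → (Fin (n+1) → ℝ)) (d : Fin (n+1) → ℝ)
    (hd : ∀ m : Fin (n+1), d m = (Matrix.of (Fin.snoc v (Pi.single m 1))).det)
    (w : Fin (n+1) → ℝ) :
    (Matrix.of (Fin.snoc v w)).det = d ⬝ᵥ w := by
  classical
  have hw : w = ∑ m : Fin (n+1), w m • (Pi.single m 1 : Fin (n+1) → ℝ) := by
    funext j
    simp [Pi.single_apply, Finset.sum_ite_eq', mul_comm]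
  have h1 : ∀ z : Fin (n+1) → ℝ,
      (Matrix.of (Fin.snoc v z)).det
        = Matrix.detRowAlternating
            (Function.update (Matrix.of (Fin.snoc v w)) (Fin.last n) z) := by
    intro z
    congr 1
    funext i
    refine Fin.lastCases ?_ (fun i => ?_) i
    · erw [Function.update_self]
      show (Fin.snoc v z : Fin (n+1) → Fin (n+1) → ℝ) (Fin.last n) = z
      rw [Fin.snoc_last]
    · erw [Function.update_of_ne (Fin.castSucc_lt_last i).ne]
      show (Fin.snoc v z : Fin (n+1) → Fin (n+1) → ℝ) i.castSucc
         = (Fin.snoc v w : Fin (n+1) → Fin (n+1) → ℝ) i.castSucc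
      rw [Fin.snoc_castSucc, Fin.snoc_castSucc]
  rw [h1 w]
  nth_rewrite 2 [hw]
  erw [AlternatingMap.map_update_sum]
  rw [dotProduct]
  refine Finset.sum_congr rfl fun m _ => ?_
  erw [AlternatingMap.map_update_smul, ← h1 (Pi.single m 1), ← hd m]
  simp [smul_eq_mul, mul_comm]

theorem vectorProduct_dotProduct_vectorProduct (n : ℕ)
    (u v : Fin n → (Fin (n+1) → ℝ)) (c d : Fin (n+1) → ℝ)
    (hc : ∀ m : Fin (n+1), c m = (Matrix.of (Fin.snoc u (Pi.single m 1))).det)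
    (hd : ∀ m : Fin (n+1), d m = (Matrix.of (Fin.snoc v (Pi.single m 1))).det) :
    c ⬝ᵥ d = (Matrix.of (fun i j : Fin n => u i ⬝ᵥ v j)).det := by
  classical
  set G : Matrix (Fin n) (Fin n) ℝ := Matrix.of (fun i j : Fin n => u i ⬝ᵥ v j) with hG
  have hA : (Matrix.of (Fin.snoc u d)).det = c ⬝ᵥ d := vp_key n u c hc d
  have hB : (Matrix.of (Fin.snoc v d)).det = d ⬝ᵥ d := vp_key n v d hd d
  have hdv : ∀ j : Fin n, d ⬝ᵥ v j = 0 := by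
    intro j
    rw [← vp_key n v d hd (v j)]
    refine Matrix.det_zero_of_row_eq (i := j.castSucc) (j := Fin.last n)
      (Fin.castSucc_lt_last j).ne ?_
    show (Fin.snoc v (v j) : Fin (n+1) → Fin (n+1) → ℝ) j.castSucc
       = (Fin.snoc v (v j) : Fin (n+1) → Fin (n+1) → ℝ) (Fin.last n)
    rw [Fin.snoc_castSucc, Fin.snoc_last]
  have hprod : (Matrix.of (Fin.snoc u d)) * (Matrix.of (Fin.snoc v d))ᵀ
      = Matrix.of (fun i j : Fin (n+1) => (Fin.snoc u d : Fin (n+1) → Fin (n+1) → ℝ) i ⬝ᵥ (Fin.snoc v d : Fin (n+1) → Fin (n+1) → ℝ) j) := by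
    ext i j
    simp [Matrix.mul_apply, dotProduct]
  have hMdet : (Matrix.of fun i j : Fin (n+1) => (Fin.snoc u d : Fin (n+1) → Fin (n+1) → ℝ) i ⬝ᵥ (Fin.snoc v d : Fin (n+1) → Fin (n+1) → ℝ) j).det
      = (d ⬝ᵥ d) * G.det := by
    set M : Matrix (Fin (n+1)) (Fin (n+1)) ℝ :=
      Matrix.of fun i j : Fin (n+1) => (Fin.snoc u d : Fin (n+1) → Fin (n+1) → ℝ) i ⬝ᵥ (Fin.snoc v d : Fin (n+1) → Fin (n+1) → ℝ) j with hM
    rw [Matrix.det_succ_row M (Fin.last n), Fin.sum_univ_castSucc]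
    have hz : ∀ j : Fin n,
        (-1 : ℝ) ^ ((Fin.last n : ℕ) + ((j.castSucc : Fin (n+1)) : ℕ))
          * M (Fin.last n) j.castSucc
          * (M.submatrix (Fin.last n).succAbove (j.castSucc).succAbove).det
        = 0 := by
      intro j
      have h0 : M (Fin.last n) j.castSucc = 0 := by
        show (Fin.snoc u d : Fin (n+1) → Fin (n+1) → ℝ) (Fin.last n) ⬝ᵥ (Fin.snoc v d : Fin (n+1) → Fin (n+1) → ℝ) j.castSucc = 0
        rw [Fin.snoc_last, Fin.snoc_castSucc]
        exact hdv j
      rw [h0, mul_zero, zero_mul]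
    rw [Finset.sum_congr rfl (fun j _ => hz j), Finset.sum_const_zero, zero_add]
    have h1 : M (Fin.last n) (Fin.last n) = d ⬝ᵥ d := by
      show (Fin.snoc u d : Fin (n+1) → Fin (n+1) → ℝ) (Fin.last n) ⬝ᵥ (Fin.snoc v d : Fin (n+1) → Fin (n+1) → ℝ) (Fin.last n) = d ⬝ᵥ d
      rw [Fin.snoc_last, Fin.snoc_last]
    have h2 : (M.submatrix (Fin.last n).succAbove (Fin.last n).succAbove) = G := by
      ext i j
      show (Fin.snoc u d : Fin (n+1) → Fin (n+1) → ℝ) ((Fin.last n).succAbove i)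
          ⬝ᵥ (Fin.snoc v d : Fin (n+1) → Fin (n+1) → ℝ) ((Fin.last n).succAbove j)
        = u i ⬝ᵥ v j
      rw [Fin.succAbove_last, Fin.snoc_castSucc, Fin.snoc_castSucc]
    rw [h1, h2]
    have hsign : (-1 : ℝ) ^ ((Fin.last n : ℕ) + ((Fin.last n : Fin (n+1)) : ℕ)) = 1 := by
      rw [Fin.val_last]
      exact Even.neg_one_pow ⟨n, rfl⟩
    rw [hsign, one_mul]
  have key2 : (c ⬝ᵥ d) * (d ⬝ᵥ d) = (d ⬝ᵥ d) * G.det := by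
    calc (c ⬝ᵥ d) * (d ⬝ᵥ d)
        = (Matrix.of (Fin.snoc u d)).det * (Matrix.of (Fin.snoc v d))ᵀ.det := by
          rw [Matrix.det_transpose, hA, hB]
      _ = ((Matrix.of (Fin.snoc u d)) * (Matrix.of (Fin.snoc v d))ᵀ).det :=
          (Matrix.det_mul _ _).symm
      _ = (d ⬝ᵥ d) * G.det := by rw [hprod, hMdet]
  by_cases hdd : d ⬝ᵥ d = 0
  · have hd0 : d = 0 := dotProduct_self_eq_zero.mp hdd
    have hcd0 : c ⬝ᵥ d = 0 := by rw [hd0, dotProduct_zero]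
    rw [hcd0]
    show (0 : ℝ) = G.det
    by_cases hv : LinearIndependent ℝ v
    · exfalso
      obtain ⟨w, hw⟩ : ∃ w, w ∉ Submodule.span ℝ (Set.range v) := by
        by_contra h
        push_neg at h
        have htop : Submodule.span ℝ (Set.range v) = ⊤ :=
          eq_top_iff.mpr fun x _ => h x
        have h1 : Module.finrank ℝ (Submodule.span ℝ (Set.range v)) ≤ n :=
          finrank_range_le_card v |>.trans (by simp)
        rw [htop, finrank_top] at h1
        have h2 : n + 1 ≤ n := by simpa [Module.finrank_pi] using h1
        exact Nat.not_succ_le_self n h2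
      have hsnoc : LinearIndependent ℝ (Fin.snoc v w : Fin (n+1) → Fin (n+1) → ℝ) :=
        linearIndependent_fin_snoc.mpr ⟨hv, hw⟩
      have hdet : (Matrix.of (Fin.snoc v w)).det ≠ 0 := by
        have hu : IsUnit (Matrix.of (Fin.snoc v w)) :=
          Matrix.linearIndependent_rows_iff_isUnit.mp hsnoc
        exact ((Matrix.isUnit_iff_isUnit_det _).mp hu).ne_zero
      apply hdet
      rw [vp_key n v d hd w, hd0, zero_dotProduct]
    · obtain ⟨g, hg, i, hgi⟩ := Fintype.not_linearIndependent_iff.mp hv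
      by_contra hGdet
      apply hgi
      have hmv : G.mulVec g = 0 := by
        funext i'
        have : ∀ j : Fin n, G i' j * g j = u i' ⬝ᵥ (g j • v j) := by
          intro j
          simp [hG, dotProduct, Finset.mul_sum, Finset.sum_mul, mul_comm,
            mul_left_comm, mul_assoc]
        calc G.mulVec g i' = ∑ j, G i' j * g j := rfl
          _ = ∑ j, u i' ⬝ᵥ (g j • v j) := Finset.sum_congr rfl fun j _ => this j
          _ = u i' ⬝ᵥ (∑ j, g j • v j) := by
              simp [dotProduct, Finset.mul_sum]
              rw [Finset.sum_comm]
          _ = 0 := by rw [hg, dotProduct_zero]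
      have := Matrix.eq_zero_of_mulVec_eq_zero (fun h => hGdet h.symm) hmv
      rw [this]
      rfl
  · have key2' : (d ⬝ᵥ d) * (c ⬝ᵥ d) = (d ⬝ᵥ d) * G.det := by
      rw [mul_comm] at key2; exact key2
    exact mul_left_cancel₀ hdd key2'
end

section
/- Let α, β, γ be Lipschitz integers with β orthogonal to α and γ orthogonal to α, i.e. (β * star α).re = 0 and (γ * star α).re = 0, and let δ be their vector product, i.e. a Lipschitz integer such that for every x : Quaternion ℤ, (δ * star x).re equals the determinant of the 4×4 integer matrix whose rows are the coordinate vectors ![re, imI, imJ, imK] of α, β, γ, x, in this order. Then N(α) divides N(δ) in ℤ, i.e. Quaternion.normSq α ∣ Quaternion.normSq δ. -/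
/-- The coordinate vector of a Lipschitz integer. -/
def coords (q : Quaternion ℤ) : Fin 4 → ℤ := ![q.re, q.imI, q.imJ, q.imK]

lemma det_fin_four' (M : Matrix (Fin 4) (Fin 4) ℤ) :
    M.det = M 0 0*M 1 1*M 2 2*M 3 3 - M 0 0*M 1 1*M 2 3*M 3 2 - M 0 0*M 1 2*M 2 1*M 3 3 + M 0 0*M 1 2*M 2 3*M 3 1 + M 0 0*M 1 3*M 2 1*M 3 2 - M 0 0*M 1 3*M 2 2*M 3 1 - M 0 1*M 1 0*M 2 2*M 3 3 + M 0 1*M 1 0*M 2 3*M 3 2 + M 0 1*M 1 2*M 2 0*M 3 3 - M 0 1*M 1 2*M 2 3*M 3 0 - M 0 1*M 1 3*M 2 0*M 3 2 + M 0 1*M 1 3*M 2 2*M 3 0 + M 0 2*M 1 0*M 2 1*M 3 3 - M 0 2*M 1 0*M 2 3*M 3 1 - M 0 2*M 1 1*M 2 0*M 3 3 + M 0 2*M 1 1*M 2 3*M 3 0 + M 0 2*M 1 3*M 2 0*M 3 1 - M 0 2*M 1 3*M 2 1*M 3 0 - M 0 3*M 1 0*M 2 1*M 3 2 + M 0 3*M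 1 0*M 2 2*M 3 1 + M 0 3*M 1 1*M 2 0*M 3 2 - M 0 3*M 1 1*M 2 2*M 3 0 - M 0 3*M 1 2*M 2 0*M 3 1 + M 0 3*M 1 2*M 2 1*M 3 0 := by
  rw [Matrix.det_succ_row_zero]
  simp [Fin.sum_univ_succ, Matrix.det_fin_three, Fin.succAbove, Matrix.submatrix,
    show (Fin.succ 2 : Fin 4) = 3 from rfl, show (Fin.castSucc 2 : Fin 4) = 2 from rfl,
    show ((1 : Fin 4) < 3) from by decide]
  ring

theorem normSq_dvd_normSq_vectorProduct (α β γ δ : Quaternion ℤ)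
    (hβ : (β * star α).re = 0) (hγ : (γ * star α).re = 0)
    (hδ : ∀ x : Quaternion ℤ,
      (δ * star x).re = (Matrix.of ![coords α, coords β, coords γ, coords x]).det) :
    Quaternion.normSq α ∣ Quaternion.normSq δ := by
  have h1 := hδ ⟨1,0,0,0⟩
  have hi := hδ ⟨0,1,0,0⟩
  have hj := hδ ⟨0,0,1,0⟩
  have hk := hδ ⟨0,0,0,1⟩
  simp [coords, det_fin_four', Quaternion.re_mul, Quaternion.re_star, Quaternion.imI_star, Quaternion.imJ_star, Quaternion.imK_star,
    Quaternion.re_star (a := (⟨1,0,0,0⟩ : Quaternion ℤ)), Quaternion.imI_star (a := (⟨1,0,0,0⟩ : Quaternion ℤ)), Quaternion.imJ_star (a := (⟨1,0,0,0⟩ : Quaternion ℤ)), Quaternion.imK_star (a := (⟨1,0,0,0⟩ : Quaternion ℤ)),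
    Quaternion.re_star (a := (⟨0,1,0,0⟩ : Quaternion ℤ)), Quaternion.imI_star (a := (⟨0,1,0,0⟩ : Quaternion ℤ)), Quaternion.imJ_star (a := (⟨0,1,0,0⟩ : Quaternion ℤ)), Quaternion.imK_star (a := (⟨0,1,0,0⟩ : Quaternion ℤ)),
    Quaternion.re_star (a := (⟨0,0,1,0⟩ : Quaternion ℤ)), Quaternion.imI_star (a := (⟨0,0,1,0⟩ : Quaternion ℤ)), Quaternion.imJ_star (a := (⟨0,0,1,0⟩ : Quaternion ℤ)), Quaternion.imK_star (a := (⟨0,0,1,0⟩ : Quaternion ℤ)),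
    Quaternion.re_star (a := (⟨0,0,0,1⟩ : Quaternion ℤ)), Quaternion.imI_star (a := (⟨0,0,0,1⟩ : Quaternion ℤ)), Quaternion.imJ_star (a := (⟨0,0,0,1⟩ : Quaternion ℤ)), Quaternion.imK_star (a := (⟨0,0,0,1⟩ : Quaternion ℤ)),
    Matrix.cons_val_zero, Matrix.cons_val_one] at h1 hi hj hk hβ hγ
  refine ⟨Quaternion.normSq β * Quaternion.normSq γ - ((β * star γ).re)^2, ?_⟩
  simp only [Quaternion.normSq_def', Quaternion.re_mul, Quaternion.re_star, Quaternion.imI_star,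
    Quaternion.imJ_star, Quaternion.imK_star, mul_neg, sub_neg_eq_add]
  rw [h1, hi, hj, hk]
  linear_combination
    ((β.re*γ.re + β.imI*γ.imI + β.imJ*γ.imJ + β.imK*γ.imK) *
       (γ.re*α.re + γ.imI*α.imI + γ.imJ*α.imJ + γ.imK*α.imK)
     - (β.re*α.re + β.imI*α.imI + β.imJ*α.imJ + β.imK*α.imK) *
       (γ.re^2 + γ.imI^2 + γ.imJ^2 + γ.imK^2)) * hβ
    + ((β.re*α.re + β.imI*α.imI + β.imJ*α.imJ + β.imK*α.imK) *
       (β.re*γ.re + β.imI*γ.imI + β.imJ*γ.imJ + β.imK*γ.imK)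
     - (γ.re*α.re + γ.imI*α.imI + γ.imJ*α.imJ + γ.imK*α.imK) *
       (β.re^2 + β.imI^2 + β.imJ^2 + β.imK^2)) * hγ
end

section
/- Let a, b, c, d be integers with gcd(gcd(a,b), gcd(c,d)) = 1 (α = ⟨a,b,c,d⟩ is primitive), let g₁ = gcd(a,b) ≠ 0 and g₂ = gcd(c,d) ≠ 0, write a = g₁·a', b = g₁·b', c = g₂·c', d = g₂·d' with a', b', c', d' integers, and let x₀, y₀, z₀, t₀ be integers with a·x₀ + b·y₀ = g₁ and c·z₀ + d·t₀ = g₂. Set β₁ = ⟨g₂·x₀, g₂·y₀, −g₁·z₀, −g₁·t₀⟩, β₂ = ⟨b', −a', 0, 0⟩, β₃ = ⟨0, 0, d', −c'⟩ in Quaternion ℤ. Then for every Lipschitz integer γ, γ is orthogonal to α (i.e. (γ * star α).re = 0) if and only if there exist integers r, s, u with γ = r•β₁ + s•β₂ + u•β₃. (That is, the ℤ-module α^⊥ ∩ 𝓛 is generated by β₁ = g₂(x₀ + y₀ i) − g₁(z₀ + t₀ i)j, β₂ = (1/g₁)(b − a i), β₃ = (1/g₂)(d − c i)j.) -/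
theorem orthogonal_complement_generators (a b c d g₁ g₂ a' b' c' d' x₀ y₀ z₀ t₀ : ℤ)
    (hprim : Int.gcd (Int.gcd a b) (Int.gcd c d) = 1)
    (hg₁ : g₁ = Int.gcd a b) (hg₂ : g₂ = Int.gcd c d)
    (hg₁0 : g₁ ≠ 0) (hg₂0 : g₂ ≠ 0)
    (ha : a = g₁ * a') (hb : b = g₁ * b') (hc : c = g₂ * c') (hd : d = g₂ * d')
    (hx : a * x₀ + b * y₀ = g₁) (hz : c * z₀ + d * t₀ = g₂)
    (α β₁ β₂ β₃ : Quaternion ℤ)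
    (hα : α = ⟨a, b, c, d⟩)
    (hβ₁ : β₁ = ⟨g₂ * x₀, g₂ * y₀, -(g₁ * z₀), -(g₁ * t₀)⟩)
    (hβ₂ : β₂ = ⟨b', -a', 0, 0⟩)
    (hβ₃ : β₃ = ⟨0, 0, d', -c'⟩) :
    ∀ γ : Quaternion ℤ,
      (γ * star α).re = 0 ↔ ∃ r s u : ℤ, γ = r • β₁ + s • β₂ + u • β₃ := by
  subst hα hβ₁ hβ₂ hβ₃
  have F1 : a' * x₀ + b' * y₀ = 1 := by
    apply mul_left_cancel₀ hg₁0
    rw [ha, hb] at hx; linarith [hx]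
  have F3 : c' * z₀ + d' * t₀ = 1 := by
    apply mul_left_cancel₀ hg₂0
    rw [hc, hd] at hz; linarith [hz]
  have hcop : IsCoprime g₁ g₂ := by
    rw [Int.isCoprime_iff_gcd_eq_one, hg₁, hg₂]
    simpa using hprim
  obtain ⟨U, V, hUV⟩ := hcop
  intro γ
  constructor
  · intro h
    obtain ⟨p, q, m, n⟩ := γ
    erw [Quaternion.re_mul, Quaternion.re_star, Quaternion.imI_star,
      Quaternion.imJ_star, Quaternion.imK_star] at h
    have key : g₁ * (p * a' + q * b') + g₂ * (m * c' + n * d') = 0 := by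
      rw [ha, hb, hc, hd] at h; linarith [h]
    set r : ℤ := V * (p * a' + q * b') - U * (m * c' + n * d') with hr
    have hr2 : r * g₂ = p * a' + q * b' := by
      linear_combination g₂ * hr + (p * a' + q * b') * hUV - U * key
    have hr1 : m * c' + n * d' = -(r * g₁) := by
      apply mul_left_cancel₀ hg₂0
      linear_combination key + g₁ * hr2
    refine ⟨r, y₀ * (p - r * g₂ * x₀) - x₀ * (q - r * g₂ * y₀),
      t₀ * (m + r * g₁ * z₀) - z₀ * (n + r * g₁ * t₀), ?_⟩
    ext <;> simp <;> ring_nf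
    · erw [Quaternion.re_smul, Quaternion.re_smul, Quaternion.re_smul]
      simp only [smul_eq_mul]
      linear_combination (-p) * F1 + (-x₀) * hr2
    · erw [Quaternion.imI_smul, Quaternion.imI_smul, Quaternion.imI_smul]
      simp only [smul_eq_mul]
      linear_combination (-q) * F1 + (-y₀) * hr2
    · erw [Quaternion.imJ_smul, Quaternion.imJ_smul, Quaternion.imJ_smul]
      simp only [smul_eq_mul]
      linear_combination (-m) * F3 + z₀ * hr1
    · erw [Quaternion.imK_smul, Quaternion.imK_smul, Quaternion.imK_smul]
      simp only [smul_eq_mul]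
      linear_combination (-n) * F3 + t₀ * hr1
  · rintro ⟨r, s, u, rfl⟩
    erw [Quaternion.re_mul, Quaternion.re_star, Quaternion.imI_star,
      Quaternion.imJ_star, Quaternion.imK_star, Quaternion.re_add, Quaternion.re_add,
      Quaternion.imI_add, Quaternion.imI_add, Quaternion.imJ_add, Quaternion.imJ_add,
      Quaternion.imK_add, Quaternion.imK_add, Quaternion.re_smul, Quaternion.re_smul,
      Quaternion.re_smul, Quaternion.imI_smul, Quaternion.imI_smul, Quaternion.imI_smul,
      Quaternion.imJ_smul, Quaternion.imJ_smul, Quaternion.imJ_smul, Quaternion.imK_smul,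
      Quaternion.imK_smul, Quaternion.imK_smul]
    simp only [smul_eq_mul]
    linear_combination (r * g₂) * hx - (r * g₁) * hz + (s * b') * ha - (s * a') * hb
      + (u * d') * hc - (u * c') * hd
end

section
/- Let a, b, c, d be integers, let α = ⟨a, b, c, d⟩ : Quaternion ℤ, and let δ be the vector product of α, b − a i = ⟨b, −a, 0, 0⟩, and d j − c k = ⟨0, 0, d, −c⟩, i.e. a Lipschitz integer such that for every x : Quaternion ℤ, (δ * star x).re equals the determinant of the 4×4 integer matrix whose rows are the coordinate vectors ![re, imI, imJ, imK] of α, ⟨b,−a,0,0⟩, ⟨0,0,d,−c⟩, x, in this order. Then δ = α * ((−j) * (a + b i) * (c − d i)) and δ = ((a + b i) * (c + d i) * (−j)) * α, where i = ⟨0,1,0,0⟩, j = ⟨0,0,1,0⟩, and a + b i = ⟨a,b,0,0⟩, c ± d i = ⟨c,±d,0,0⟩. -/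
theorem vectorProduct_alpha_beta2_beta3 (a b c d : ℤ) (α δ j zI wI wIc : Quaternion ℤ)
    (hα : α = ⟨a, b, c, d⟩) (hj : j = ⟨0, 0, 1, 0⟩)
    (hzI : zI = ⟨a, b, 0, 0⟩) (hwI : wI = ⟨c, d, 0, 0⟩) (hwIc : wIc = ⟨c, -d, 0, 0⟩)
    (hδ : ∀ x : Quaternion ℤ,
      (δ * star x).re =
        (Matrix.of ![coords α, coords ⟨b, -a, 0, 0⟩, coords ⟨0, 0, d, -c⟩, coords x]).det) :
    δ = α * ((-j) * zI * wIc) ∧ δ = (zI * wI * (-j)) * α := by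
  have h1 := hδ ⟨1, 0, 0, 0⟩
  have h2 := hδ ⟨0, 1, 0, 0⟩
  have h3 := hδ ⟨0, 0, 1, 0⟩
  have h4 := hδ ⟨0, 0, 0, 1⟩
  simp only [Quaternion.ext_iff, Quaternion.re_mul, Quaternion.imI_mul, Quaternion.imJ_mul, Quaternion.imK_mul, Quaternion.re_star, Quaternion.imI_star, Quaternion.imJ_star, Quaternion.imK_star, Quaternion.re_neg, Quaternion.imI_neg, Quaternion.imJ_neg, Quaternion.imK_neg] at h1 h2 h3 h4 ⊢
  erw [Quaternion.re_star, Quaternion.imI_star, Quaternion.imJ_star, Quaternion.imK_star] at h1 h2 h3 h4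
  subst hα hj hzI hwI hwIc
  simp [coords, Matrix.det_succ_row_zero, Fin.sum_univ_succ, show (Fin.succAbove 1 2 : Fin 4) = 3 from rfl, show (Fin.succAbove 2 2 : Fin 4) = 3 from rfl, show (Fin.castSucc 2 : Fin 4) = 2 from rfl, Quaternion.ext_iff, Quaternion.re_mul,
    Quaternion.imI_mul, Quaternion.imJ_mul, Quaternion.imK_mul, show (Fin.succAbove 3 2 : Fin 4) = 2 from rfl] at h1 h2 h3 h4 ⊢
  constructor <;> refine ⟨?_, ?_, ?_, ?_⟩ <;> simp [h1, h2, h3, h4] <;> ring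
end

section
/- Let α, β, γ, δ be Lipschitz integers and let ε be the vector product of αβ, αγ, and δ, i.e. a Lipschitz integer such that for every x : Quaternion ℤ, (ε * star x).re equals the determinant of the 4×4 integer matrix whose rows are the coordinate vectors ![re, imI, imJ, imK] of α * β, α * γ, δ, x, in this order. Then ε is a right multiple of α: there exists a Lipschitz integer λ with ε = α * λ. -/
theorem det4_rows (a b c d : Fin 4 → ℤ) :
    (Matrix.of ![a, b, c, d]).det =
      a 0 * b 1 * c 2 * d 3
      - a 0 * b 1 * c 3 * d 2
      - a 0 * b 2 * c 1 * d 3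
      + a 0 * b 2 * c 3 * d 1
      + a 0 * b 3 * c 1 * d 2
      - a 0 * b 3 * c 2 * d 1
      - a 1 * b 0 * c 2 * d 3
      + a 1 * b 0 * c 3 * d 2
      + a 1 * b 2 * c 0 * d 3
      - a 1 * b 2 * c 3 * d 0
      - a 1 * b 3 * c 0 * d 2
      + a 1 * b 3 * c 2 * d 0
      + a 2 * b 0 * c 1 * d 3
      - a 2 * b 0 * c 3 * d 1
      - a 2 * b 1 * c 0 * d 3
      + a 2 * b 1 * c 3 * d 0
      + a 2 * b 3 * c 0 * d 1
      - a 2 * b 3 * c 1 * d 0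
      - a 3 * b 0 * c 1 * d 2
      + a 3 * b 0 * c 2 * d 1
      + a 3 * b 1 * c 0 * d 2
      - a 3 * b 1 * c 2 * d 0
      - a 3 * b 2 * c 0 * d 1
      + a 3 * b 2 * c 1 * d 0 := by
  simp [Matrix.det_succ_row_zero, Fin.sum_univ_succ, Fin.succAbove,
    show (Fin.succ 2 : Fin 4) = 3 from rfl,
    show (Fin.castSucc 2 : Fin 4) = 2 from rfl, show ((1:Fin 4) < 3) from by decide]
  ring

/-- The vector product of three quaternions, defined by cofactor coordinates. -/
def vp (a b c : Quaternion ℤ) : Quaternion ℤ :=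
  ⟨(Matrix.of ![coords a, coords b, coords c, coords 1]).det,
   (Matrix.of ![coords a, coords b, coords c, coords ⟨0,1,0,0⟩]).det,
   (Matrix.of ![coords a, coords b, coords c, coords ⟨0,0,1,0⟩]).det,
   (Matrix.of ![coords a, coords b, coords c, coords ⟨0,0,0,1⟩]).det⟩

theorem qstar_mk (a b c d : ℤ) :
    @star (Quaternion ℤ) _ ⟨a, b, c, d⟩ = (⟨a, -b, -c, -d⟩ : Quaternion ℤ) := by
  ext
  exacts [Quaternion.re_star _, Quaternion.imI_star _, Quaternion.imJ_star _, Quaternion.imK_star _]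

theorem qmul_mk_re (x : Quaternion ℤ) (a b c d : ℤ) :
    (@HMul.hMul (Quaternion ℤ) (Quaternion ℤ) (Quaternion ℤ) _ x ⟨a, b, c, d⟩).re =
      x.re * a - x.imI * b - x.imJ * c - x.imK * d := Quaternion.re_mul x _

theorem qmul_mk_imI (x : Quaternion ℤ) (a b c d : ℤ) :
    (@HMul.hMul (Quaternion ℤ) (Quaternion ℤ) (Quaternion ℤ) _ x ⟨a, b, c, d⟩).imI =
      x.re * b + x.imI * a + x.imJ * d - x.imK * c := Quaternion.imI_mul x _

theorem qmul_mk_imJ (x : Quaternion ℤ) (a b c d : ℤ) :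
    (@HMul.hMul (Quaternion ℤ) (Quaternion ℤ) (Quaternion ℤ) _ x ⟨a, b, c, d⟩).imJ =
      x.re * c - x.imI * d + x.imJ * a + x.imK * b := Quaternion.imJ_mul x _

theorem qmul_mk_imK (x : Quaternion ℤ) (a b c d : ℤ) :
    (@HMul.hMul (Quaternion ℤ) (Quaternion ℤ) (Quaternion ℤ) _ x ⟨a, b, c, d⟩).imK =
      x.re * d + x.imI * c - x.imJ * b + x.imK * a := Quaternion.imK_mul x _

set_option maxHeartbeats 2000000 in
theorem vectorProduct_left_multiples_is_right_multiple (α β γ δ ε : Quaternion ℤ)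
    (hε : ∀ x : Quaternion ℤ,
      (ε * star x).re = (Matrix.of ![coords (α * β), coords (α * γ), coords δ, coords x]).det) :
    ∃ l : Quaternion ℤ, ε = α * l := by
  refine ⟨vp β γ (star α * δ), ?_⟩
  have h0 := hε 1
  have h1 := hε ⟨0,1,0,0⟩
  have h2 := hε ⟨0,0,1,0⟩
  have h3 := hε ⟨0,0,0,1⟩
  simp only [det4_rows, coords, Matrix.cons_val_zero, Matrix.cons_val_one, Matrix.head_cons,
    Matrix.cons_val_two, Matrix.tail_cons, Matrix.cons_val_three,
    Quaternion.re_mul, Quaternion.imI_mul, Quaternion.imJ_mul, Quaternion.imK_mul,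
    Quaternion.re_star, Quaternion.imI_star, Quaternion.imJ_star, Quaternion.imK_star,
    QuaternionAlgebra.re_star, QuaternionAlgebra.imI_star, QuaternionAlgebra.imJ_star,
    QuaternionAlgebra.imK_star, qstar_mk, qmul_mk_re, qmul_mk_imI, qmul_mk_imJ, qmul_mk_imK,
    Quaternion.re_one, Quaternion.imI_one, Quaternion.imJ_one, Quaternion.imK_one]
    at h0 h1 h2 h3
  ext <;>
  simp only [vp, coords, det4_rows, Matrix.cons_val_zero, Matrix.cons_val_one, Matrix.head_cons,
    Matrix.cons_val_two, Matrix.tail_cons, Matrix.cons_val_three,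
    Quaternion.re_mul, Quaternion.imI_mul, Quaternion.imJ_mul, Quaternion.imK_mul,
    Quaternion.re_star, Quaternion.imI_star, Quaternion.imJ_star, Quaternion.imK_star,
    QuaternionAlgebra.re_star, QuaternionAlgebra.imI_star, QuaternionAlgebra.imJ_star,
    QuaternionAlgebra.imK_star, qstar_mk, qmul_mk_re, qmul_mk_imI, qmul_mk_imJ, qmul_mk_imK,
    Quaternion.re_one, Quaternion.imI_one, Quaternion.imJ_one, Quaternion.imK_one] <;>
  [linear_combination h0; linear_combination h1; linear_combination h2; linear_combination h3]
end
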